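/- Angle copying: in the Euclidean plane EuclideanSpace ℝ (Fin 2), let p ≠ s, let q be a point not in the affine span of {p, s}, and let a, b, c be points with a ≠ b and c ≠ b. Then there exist points a', c', x such that ∠ a' p c' = ∠ a b c, c' lies in the affine span of {p, s} with c' ≠ p, x lies in the affine span of {p, s}, and Wbtw ℝ q x a' (so a' lies on the opposite side of the line ps from q, or on it). -/

import Mathlib

open EuclideanGeometry

set_option maxHeartbeats 1000000 in
/-- Angle copying: any angle can be copied to a given vertex `p` on the line through
`p` and `s`, with the copy lying on the opposite side of that line from `q` (or on it). -/
theorem angle_copying {p s q a b c : EuclideanSpace ℝ (Fin 2)}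
    (hps : p ≠ s) (hq : q ∉ affineSpan ℝ ({p, s} : Set (EuclideanSpace ℝ (Fin 2))))
    (hab : a ≠ b) (hcb : c ≠ b) :
    ∃ a' c' x : EuclideanSpace ℝ (Fin 2),
      ∠ a' p c' = ∠ a b c ∧
      c' ∈ affineSpan ℝ ({p, s} : Set (EuclideanSpace ℝ (Fin 2))) ∧ c' ≠ p ∧
      x ∈ affineSpan ℝ ({p, s} : Set (EuclideanSpace ℝ (Fin 2))) ∧
      Wbtw ℝ q x a' := by
  classical
  set d : EuclideanSpace ℝ (Fin 2) := s - p with hd_def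
  have hd : d ≠ 0 := sub_ne_zero.2 hps.symm
  have hdn : ‖d‖ ≠ 0 := norm_ne_zero_iff.2 hd
  set u : EuclideanSpace ℝ (Fin 2) := ‖d‖⁻¹ • d with hu_def
  have hu : ‖u‖ = 1 := by
    rw [hu_def, norm_smul]
    simp [abs_of_nonneg (inv_nonneg.2 (norm_nonneg d)), inv_mul_cancel₀ hdn]
  have huu : (inner ℝ u u : ℝ) = 1 := by
    rw [real_inner_self_eq_norm_sq, hu]; norm_num
  set t : ℝ := (inner ℝ (q - p) u : ℝ) with ht_def
  set w : EuclideanSpace ℝ (Fin 2) := (q - p) - t • u with hw_def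
  -- w ≠ 0 since q is not on the line
  have hw : w ≠ 0 := by
    intro h0
    apply hq
    have hqp' : q - p = (t * ‖d‖⁻¹) • (s - p) := by
      have h1 : q - p = t • u := sub_eq_zero.1 h0
      rw [h1, hu_def, smul_smul, hd_def]
    have hmem : (q - p) +ᵥ p ∈ line[ℝ, p, s] := by
      rw [vadd_left_mem_affineSpan_pair]
      exact ⟨t * ‖d‖⁻¹, by rw [vsub_eq_sub, ← hqp']⟩
    simpa using hmem
  have hwn : (0:ℝ) < ‖w‖ := norm_pos_iff.2 hw
  have huw : (inner ℝ u w : ℝ) = 0 := by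
    rw [hw_def, inner_sub_right, real_inner_smul_right, huu, real_inner_comm,
      ← ht_def]
    ring
  set v : EuclideanSpace ℝ (Fin 2) := -(‖w‖⁻¹ • w) with hv_def
  have hv : ‖v‖ = 1 := by
    rw [hv_def, norm_neg, norm_smul]
    simp [abs_of_nonneg (inv_nonneg.2 (norm_nonneg w)), inv_mul_cancel₀ hwn.ne']
  have hvv : (inner ℝ v v : ℝ) = 1 := by
    rw [real_inner_self_eq_norm_sq, hv]; norm_num
  have huv : (inner ℝ u v : ℝ) = 0 := by
    rw [hv_def, inner_neg_right, real_inner_smul_right, huw]; ring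
  have hwv : w = (-‖w‖) • v := by
    rw [hv_def, smul_neg, neg_smul, neg_neg, smul_smul, mul_inv_cancel₀ hwn.ne', one_smul]
  have hqp : q = t • u + (-‖w‖) • v + p := by
    have h1 : q - p = t • u + w := by rw [hw_def]; abel
    rw [hwv] at h1
    exact (sub_eq_iff_eq_add.1 h1)
  set θ : ℝ := ∠ a b c with hθ_def
  have hθ0 : 0 ≤ θ := by rw [hθ_def]; exact EuclideanGeometry.angle_nonneg a b c
  have hθπ : θ ≤ Real.pi := by rw [hθ_def]; exact EuclideanGeometry.angle_le_pi a b c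
  have hsθ : 0 ≤ Real.sin θ := Real.sin_nonneg_of_nonneg_of_le_pi hθ0 hθπ
  set a' : EuclideanSpace ℝ (Fin 2) := Real.cos θ • u + Real.sin θ • v + p with ha'_def
  set den : ℝ := ‖w‖ + Real.sin θ with hden_def
  have hden : (0:ℝ) < den := by rw [hden_def]; positivity
  set r : ℝ := ‖w‖ / den with hr_def
  have hr0 : 0 ≤ r := by rw [hr_def]; exact div_nonneg (norm_nonneg w) hden.le
  have hr1 : r ≤ 1 := by
    rw [hr_def]
    exact (div_le_one hden).2 (by rw [hden_def]; linarith)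
  have hrs : r * (Real.sin θ + ‖w‖) = ‖w‖ := by
    rw [hr_def, div_mul_eq_mul_div, div_eq_iff hden.ne', hden_def]
    ring
  set x : EuclideanSpace ℝ (Fin 2) := AffineMap.lineMap q a' r with hx_def
  have hsp : s - p = ‖d‖ • u := by
    rw [hu_def, smul_smul, mul_inv_cancel₀ hdn, one_smul, hd_def]
  clear_value d u t w v θ a' den r x
  refine ⟨a', s, x, ?_, right_mem_affineSpan_pair ℝ p s, hps.symm, ?_, ?_⟩
  · -- angle equality
    have hap : a' - p = Real.cos θ • u + Real.sin θ • v := by rw [ha'_def]; abel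
    have hX : ‖Real.cos θ • u + Real.sin θ • v‖ = 1 := by
      have h2 : ‖Real.cos θ • u + Real.sin θ • v‖ ^ 2 = 1 := by
        rw [← real_inner_self_eq_norm_sq, real_inner_add_add_self]
        simp only [real_inner_smul_left, real_inner_smul_right, huu, hvv, huv]
        nlinarith [Real.sin_sq_add_cos_sq θ]
      nlinarith [norm_nonneg (Real.cos θ • u + Real.sin θ • v)]
    have hIP : (inner ℝ (Real.cos θ • u + Real.sin θ • v) u : ℝ) = Real.cos θ := by
      rw [inner_add_left, real_inner_smul_left, real_inner_smul_left, huu,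
        real_inner_comm u v, huv]
      ring
    show InnerProductGeometry.angle (a' -ᵥ p) (s -ᵥ p) = θ
    rw [vsub_eq_sub, vsub_eq_sub, hap, hsp,
      InnerProductGeometry.angle_smul_right_of_pos _ _ (by positivity : (0:ℝ) < ‖d‖),
      InnerProductGeometry.angle, hIP, hX, hu]
    simpa using Real.arccos_cos hθ0 hθπ
  · -- x lies on the line
    have hxval : x - p = (t + r * (Real.cos θ - t)) • u := by
      have hx1 : x = r • (a' - q) + q := by
        rw [hx_def, AffineMap.lineMap_apply, vsub_eq_sub, vadd_eq_add]
      rw [hx1, ha'_def, hqp]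
      match_scalars <;> first | ring1 | linear_combination hrs
    have h2 : x = (x - p) +ᵥ p := by rw [vadd_eq_add]; abel
    rw [h2, vadd_left_mem_affineSpan_pair]
    refine ⟨(t + r * (Real.cos θ - t)) * ‖d‖⁻¹, ?_⟩
    rw [hxval, vsub_eq_sub, ← hd_def, hu_def, smul_smul]
  · -- betweenness
    rw [hx_def]
    exact wbtw_lineMap_iff.2 (Or.inr ⟨hr0, hr1⟩)
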